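/- arXiv:2406.19714 — 3 statements merged into one kernel-verified Lean document; each statement's English description precedes it below -/
import Mathlib

section
/- Any set of pairwise apart states in an observation tree for a complete Mealy machine M has cardinality at most the number of states of M. -/
open scoped Classical

/-- A partial Mealy machine over a global symbol type `A`, with its own input
alphabet `inp ⊆ A`; transitions and outputs are partial with the same domain,
and are undefined outside the alphabet. -/
structure PMealy (A O : Type) where
  Q : Type
  init : Q
  inp : Set A
  tr : Q → A → Option Q
  out : Q → A → Option O
  dom : ∀ q i, (tr q i).isSome ↔ (out q i).isSome
  supp : ∀ q i, i ∉ inp → tr q i = none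

namespace PMealy

variable {A O : Type}

/-- Extended partial transition function on input sequences. -/
def trs (M : PMealy A O) : M.Q → List A → Option M.Q
  | q, [] => some q
  | q, i :: w => (M.tr q i).bind fun q' => M.trs q' w

/-- Extended partial output function on input sequences. -/
def outs (M : PMealy A O) : M.Q → List A → Option (List O)
  | _, [] => some []
  | q, i :: w =>
      (M.out q i).bind fun o =>
        ((M.tr q i).bind fun q' => M.outs q' w).map fun os => o :: os

/-- States `p` and `q` match: outputs agree on all sequences over the common
alphabet on which both extended transition functions are defined. -/
def Matches (M1 M2 : PMealy A O) (p : M1.Q) (q : M2.Q) : Prop :=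
  ∀ σ : List A, (∀ i ∈ σ, i ∈ M1.inp ∩ M2.inp) →
    (M1.trs p σ).isSome → (M2.trs q σ).isSome →
    M1.outs p σ = M2.outs q σ

/-- Apartness: the negation of matching. -/
def Apart (M1 M2 : PMealy A O) (p : M1.Q) (q : M2.Q) : Prop :=
  ¬ Matches M1 M2 p q

/-- `σ` is a separating sequence witnessing `p # q`. -/
def SepSeq (M1 M2 : PMealy A O) (σ : List A) (p : M1.Q) (q : M2.Q) : Prop :=
  (∀ i ∈ σ, i ∈ M1.inp ∩ M2.inp) ∧
    (M1.trs p σ).isSome ∧ (M2.trs q σ).isSome ∧ M1.outs p σ ≠ M2.outs q σ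

/-- Total apartness: apart, or some sequence over the common alphabet is
defined from exactly one of the two states. -/
def TotalApart (M1 M2 : PMealy A O) (p : M1.Q) (q : M2.Q) : Prop :=
  Apart M1 M2 p q ∨
    ∃ σ : List A, (∀ i ∈ σ, i ∈ M1.inp ∩ M2.inp) ∧
      Xor' ((M1.trs p σ).isSome = true) ((M2.trs q σ).isSome = true)

end PMealy

/-- A complete Mealy machine. -/
structure Mealy (A O : Type) where
  Q : Type
  init : Q
  tr : Q → A → Q
  out : Q → A → O

namespace Mealy

variable {A O : Type}

/-- Extended transition function. -/
def trs (M : Mealy A O) : M.Q → List A → M.Q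
  | q, [] => q
  | q, i :: w => M.trs (M.tr q i) w

/-- Extended output function. -/
def outs (M : Mealy A O) : M.Q → List A → List O
  | _, [] => []
  | q, i :: w => M.out q i :: M.outs (M.tr q i) w

/-- View a complete Mealy machine as a partial one (alphabet = all of `A`). -/
def toP (M : Mealy A O) : PMealy A O where
  Q := M.Q
  init := M.init
  inp := Set.univ
  tr := fun q i => some (M.tr q i)
  out := fun q i => some (M.out q i)
  dom := by intro q i; simp
  supp := by intro q i h; exact absurd (Set.mem_univ i) h

end Mealy

/-- A tree-shaped partial Mealy machine (tree-ness is the predicate `IsTree`). -/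
structure PTree (A O : Type) where
  Q : Type
  root : Q
  tr : Q → A → Option Q
  out : Q → A → Option O
  dom : ∀ q i, (tr q i).isSome ↔ (out q i).isSome

namespace PTree

variable {A O : Type}

def trs (T : PTree A O) : T.Q → List A → Option T.Q
  | q, [] => some q
  | q, i :: w => (T.tr q i).bind fun q' => T.trs q' w

def outs (T : PTree A O) : T.Q → List A → Option (List O)
  | _, [] => some []
  | q, i :: w =>
      (T.out q i).bind fun o =>
        ((T.tr q i).bind fun q' => T.outs q' w).map fun os => o :: os

/-- Every state is reached from the root by a unique access sequence. -/
def IsTree (T : PTree A O) : Prop :=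
  ∀ q : T.Q, ∃! σ : List A, T.trs T.root σ = some q

/-- View a tree as a partial Mealy machine over the full alphabet. -/
def toP (T : PTree A O) : PMealy A O where
  Q := T.Q
  init := T.root
  inp := Set.univ
  tr := T.tr
  out := T.out
  dom := T.dom
  supp := by intro q i h; exact absurd (Set.mem_univ i) h

/-- The prefix-suffix pair `(w, i)` is a "matching pair" for tree state `q` and
reference state `p`: the single output after running `w` agrees. -/
def matchPair (T : PTree A O) (R : Mealy A O) (q : T.Q) (p : R.Q)
    (wi : List A × A) : Prop :=
  ((T.trs q wi.1).bind fun q' => T.out q' wi.2) =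
    some (R.out (R.trs p wi.1) wi.2)

/-- Matching degree of tree state `q` against reference state `p`, relative to
the set `W` of defined prefix-suffix pairs of `q`. -/
noncomputable def mdeg (T : PTree A O) (R : Mealy A O) (q : T.Q) (p : R.Q)
    (W : Finset (List A × A)) : ℚ :=
  ((W.filter (T.matchPair R q p)).card : ℚ) / (W.card : ℚ)

end PTree

/-- An observation tree for the complete Mealy machine `M`: a tree-shaped
partial Mealy machine together with a functional simulation `f` into `M`. -/
structure ObsTree {A O : Type} (M : Mealy A O) where
  Q : Type
  root : Q
  tr : Q → A → Option Q
  out : Q → A → Option O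
  dom : ∀ q i, (tr q i).isSome ↔ (out q i).isSome
  f : Q → M.Q
  f_root : f root = M.init
  f_tr : ∀ q i q', tr q i = some q' → f q' = M.tr (f q) i
  f_out : ∀ q i o, out q i = some o → o = M.out (f q) i

namespace ObsTree

variable {A O : Type} {M : Mealy A O}

def trs (T : ObsTree M) : T.Q → List A → Option T.Q
  | q, [] => some q
  | q, i :: w => (T.tr q i).bind fun q' => T.trs q' w

def outs (T : ObsTree M) : T.Q → List A → Option (List O)
  | _, [] => some []
  | q, i :: w =>
      (T.out q i).bind fun o =>
        ((T.tr q i).bind fun q' => T.outs q' w).map fun os => o :: os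

/-- Every state is reached from the root by a unique access sequence. -/
def IsTree (T : ObsTree M) : Prop :=
  ∀ q : T.Q, ∃! σ : List A, T.trs T.root σ = some q

/-- Apartness of two tree states: some input sequence is defined from both and
yields different output sequences. -/
def Apart (T : ObsTree M) (p q : T.Q) : Prop :=
  ∃ σ : List A, (T.trs p σ).isSome ∧ (T.trs q σ).isSome ∧
    T.outs p σ ≠ T.outs q σ

end ObsTree
theorem aux_outs_eq {A O : Type} {M : Mealy A O} (T : ObsTree M) :
    ∀ (σ : List A) (p q : T.Q), T.f p = T.f q →
      (T.trs p σ).isSome → (T.trs q σ).isSome → T.outs p σ = T.outs q σ := by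
  intro σ
  induction σ with
  | nil => intro p q _ _ _; rfl
  | cons i w ih =>
    intro p q hf hp hq
    simp only [ObsTree.trs] at hp hq
    cases hp' : T.tr p i with
    | none => rw [hp'] at hp; simp at hp
    | some p' =>
    cases hq' : T.tr q i with
    | none => rw [hq'] at hq; simp at hq
    | some q' =>
    rw [hp'] at hp; rw [hq'] at hq
    have hop : (T.out p i).isSome := (T.dom p i).mp (by rw [hp']; simp)
    have hoq : (T.out q i).isSome := (T.dom q i).mp (by rw [hq']; simp)
    obtain ⟨o1, ho1⟩ := Option.isSome_iff_exists.mp hop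
    obtain ⟨o2, ho2⟩ := Option.isSome_iff_exists.mp hoq
    have e1 := T.f_out p i o1 ho1
    have e2 := T.f_out q i o2 ho2
    have hf' : T.f p' = T.f q' := by
      rw [T.f_tr p i p' hp', T.f_tr q i q' hq', hf]
    simp only [ObsTree.outs, hp', hq', ho1, ho2, Option.bind_some]
    simp only [Option.bind_some] at hp hq ⊢
    rw [ih p' q' hf' hp hq, e1, e2, hf]

/-- Any set of pairwise apart states in an observation tree for a (finite)
complete Mealy machine `M` has cardinality at most the number of states
of `M`. -/
theorem stmt5 {A O : Type} (M : Mealy A O) [Fintype M.Q] (T : ObsTree M)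
    (hT : T.IsTree) [DecidableEq T.Q] (S : Finset T.Q)
    (hS : ∀ p ∈ S, ∀ q ∈ S, p ≠ q → T.Apart p q) :
    S.card ≤ Fintype.card M.Q := by
  have hinj : Set.InjOn T.f S := by
    intro p hp q hq hf
    by_contra hne
    obtain ⟨σ, h1, h2, h3⟩ := hS p hp q hq hne
    exact h3 (aux_outs_eq T σ p q hf h1 h2)
  calc S.card = (S.image T.f).card := (Finset.card_image_of_injOn hinj).symm
    _ ≤ Fintype.card M.Q := by
        rw [← Finset.card_univ]; exact Finset.card_le_card (Finset.subset_univ _)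
end

section
/- Every finite complete Mealy machine admits a separating family: a collection of finite state identifiers {W_p} indexed by states such that for all states p, q with p # q there exists a sequence σ ∈ W_p ∩ W_q with σ ⊢ p # q. -/
open scoped Classical

/-- Every finite complete Mealy machine admits a separating family: finite
state identifiers such that any two apart states share a common separating
sequence in the intersection of their identifiers. -/
theorem stmt9 {A O : Type} [DecidableEq A] (M : Mealy A O) [Fintype M.Q] :
    ∃ W : M.Q → Finset (List A),
      ∀ p q : M.Q, (∃ σ : List A, M.outs p σ ≠ M.outs q σ) →
        ∃ σ ∈ W p ∩ W q, M.outs p σ ≠ M.outs q σ := by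
  classical
  let h : M.Q → M.Q → List A := fun p q =>
    if hpq : ∃ σ : List A, M.outs p σ ≠ M.outs q σ then hpq.choose else []
  refine ⟨fun p => (Finset.univ.image (h p)) ∪ (Finset.univ.image (fun r => h r p)),
    fun p q hpq => ?_⟩
  refine ⟨h p q, ?_, ?_⟩
  · simp [Finset.mem_inter, Finset.mem_union, Finset.mem_image]
  · simpa [h, hpq] using hpq.choose_spec
end

section
/- Promotion increases the norm: if T' extends T by moving an isolated frontier state r into the basis (B' = B ∪ {r}), then |B'|·(|B'|+1) + |{(q,r') ∈ B'×F' : q # r'}| ≥ |B|·(|B|+1) + |{(q,r') ∈ B×F : q # r'}| + 2, where F' is the new frontier (which loses r and gains at most nothing from this step). -/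
open scoped Classical

/-- Promotion increases the norm: moving an isolated frontier state `r` into
the basis increases `|B|(|B|+1)` plus the number of apart basis-frontier
pairs by at least 2. -/
theorem stmt19 {A O : Type} (M : Mealy A O) (T : ObsTree M) (hT : T.IsTree)
    [DecidableEq T.Q] (B F : Finset T.Q) (r : T.Q) (hrF : r ∈ F)
    (hrB : r ∉ B) (hiso : ∀ q ∈ B, T.Apart r q)
    (B' F' : Finset T.Q) (hB' : B' = insert r B)
    (hF' : F.erase r ⊆ F') (hrF' : r ∉ F') :
    B.card * (B.card + 1) +
        Set.ncard {x : T.Q × T.Q | x.1 ∈ B ∧ x.2 ∈ F ∧ T.Apart x.1 x.2} + 2 ≤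
      B'.card * (B'.card + 1) +
        Set.ncard {x : T.Q × T.Q | x.1 ∈ B' ∧ x.2 ∈ F' ∧ T.Apart x.1 x.2} := by

  classical
  have key : ∀ (B0 F0 : Finset T.Q),
      {x : T.Q × T.Q | x.1 ∈ B0 ∧ x.2 ∈ F0 ∧ T.Apart x.1 x.2} =
      ↑((B0 ×ˢ F0).filter fun x => T.Apart x.1 x.2) := by
    intro B0 F0
    ext x
    simp [Finset.mem_filter, Finset.mem_product, and_assoc]
  rw [key B F, key B' F', Set.ncard_coe_finset, Set.ncard_coe_finset]
  have hsub : (B ×ˢ F).filter (fun x => T.Apart x.1 x.2) ⊆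
      ((B' ×ˢ F').filter fun x => T.Apart x.1 x.2) ∪ B ×ˢ {r} := by
    intro x hx
    simp only [Finset.mem_filter, Finset.mem_product] at hx
    obtain ⟨⟨h1, h2⟩, h3⟩ := hx
    by_cases hxr : x.2 = r
    · exact Finset.mem_union_right _ (by
        simp only [Finset.mem_product, Finset.mem_singleton]
        exact ⟨h1, hxr⟩)
    · refine Finset.mem_union_left _ ?_
      simp only [Finset.mem_filter, Finset.mem_product]
      exact ⟨⟨by simp [hB', h1], hF' (Finset.mem_erase.2 ⟨hxr, h2⟩)⟩, h3⟩
  have hcard : ((B ×ˢ F).filter fun x => T.Apart x.1 x.2).card ≤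
      ((B' ×ˢ F').filter fun x => T.Apart x.1 x.2).card + B.card := by
    calc ((B ×ˢ F).filter fun x => T.Apart x.1 x.2).card
        ≤ (((B' ×ˢ F').filter fun x => T.Apart x.1 x.2) ∪ B ×ˢ {r}).card :=
          Finset.card_le_card hsub
      _ ≤ ((B' ×ˢ F').filter fun x => T.Apart x.1 x.2).card + (B ×ˢ ({r} : Finset T.Q)).card :=
          Finset.card_union_le _ _
      _ = ((B' ×ˢ F').filter fun x => T.Apart x.1 x.2).card + B.card := by
          simp [Finset.card_product]
  have hBcard : B'.card = B.card + 1 := by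
    rw [hB', Finset.card_insert_of_notMem hrB]
  rw [hBcard]
  nlinarith [hcard]
end
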